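/- On the set Λ(G) of isomorphism types of nonempty (edge-containing) induced subgraphs of a graph G, partially ordered by the induced subgraph relation, the function ρ(Λ) = v(Λ) is a rank function: whenever Λ_i covers Λ_j in this poset, v(Λ_i) = v(Λ_j) + 1. -/

import Mathlib

open SimpleGraph

/-- `A` is (isomorphic to) an induced subgraph of `B`. -/
def IsInducedSub {α β : Type} (A : SimpleGraph α) (B : SimpleGraph β) : Prop :=
  ∃ S : Set β, Nonempty ((B.induce S) ≃g A)

/-- Membership of (a representative of) an isomorphism type in `Λ(G)`:
an edge-containing induced subgraph of `G`. -/
def InLambda {V : Type} (G : SimpleGraph V) (p : Σ n : ℕ, SimpleGraph (Fin n)) : Prop :=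
  p.2 ≠ ⊥ ∧ IsInducedSub p.2 G

/-- Induced-subgraph containment is the same as the existence of a graph
embedding. -/
lemma isInducedSub_iff_embedding {α β : Type} (A : SimpleGraph α) (B : SimpleGraph β) :
    IsInducedSub A B ↔ Nonempty (A ↪g B) := by
  constructor
  · rintro ⟨S, ⟨φ⟩⟩
    exact ⟨(SimpleGraph.Embedding.induce S).comp φ.symm.toEmbedding⟩
  · rintro ⟨f⟩
    refine ⟨Set.range f, ⟨⟨(Equiv.ofInjective f f.injective).symm, ?_⟩⟩⟩
    rintro ⟨x, a, rfl⟩ ⟨y, b, rfl⟩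
    simp only [Equiv.ofInjective_symm_apply, comap_adj, Function.Embedding.coe_subtype]
    exact (f.map_adj_iff).symm

theorem lambda_poset_rank {V : Type} [Fintype V] (G : SimpleGraph V)
    (p q : Σ n : ℕ, SimpleGraph (Fin n))
    (hp : InLambda G p) (hq : InLambda G q)
    -- `p ≺ q` strictly:
    (hlt : IsInducedSub p.2 q.2 ∧ ¬ Nonempty (p.2 ≃g q.2))
    -- `q` covers `p`: no member of `Λ(G)` lies strictly between them:
    (hcov : ∀ r : Σ n : ℕ, SimpleGraph (Fin n), InLambda G r →
      IsInducedSub p.2 r.2 → IsInducedSub r.2 q.2 →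
      Nonempty (r.2 ≃g p.2) ∨ Nonempty (r.2 ≃g q.2)) :
    q.1 = p.1 + 1 := by
  classical
  obtain ⟨f⟩ := (isInducedSub_iff_embedding p.2 q.2).mp hlt.1
  obtain ⟨gG⟩ := (isInducedSub_iff_embedding q.2 G).mp hq.2
  -- `p.1 < q.1`, else `f` would be a bijective embedding hence an iso.
  have hlt' : p.1 < q.1 := by
    by_contra h
    push_neg at h
    have hinj : Function.Injective (f : Fin p.1 → Fin q.1) := f.injective
    have hle : p.1 ≤ q.1 := by
      have := Fintype.card_le_of_injective _ hinj
      simpa using this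
    have hbij : Function.Bijective (f : Fin p.1 → Fin q.1) :=
      (Fintype.bijective_iff_injective_and_card _).mpr ⟨hinj, by simp; omega⟩
    exact hlt.2 ⟨⟨Equiv.ofBijective f hbij, fun {a b} => f.map_adj_iff⟩⟩
  -- pick a vertex outside the range of `f`
  have hrange : (Set.range (f : Fin p.1 → Fin q.1)) ≠ Set.univ := by
    intro h
    have : Function.Surjective (f : Fin p.1 → Fin q.1) := Set.range_eq_univ.mp h
    have := Fintype.card_le_of_surjective _ this
    simp only [Fintype.card_fin] at this
    omega
  obtain ⟨v, hv⟩ : ∃ v, v ∉ Set.range (f : Fin p.1 → Fin q.1) := by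
    by_contra h
    push_neg at h
    exact hrange (Set.eq_univ_of_forall h)
  -- the map `Fin (p.1+1) → Fin q.1` sending the last vertex to `v`
  let g : Fin (p.1 + 1) → Fin q.1 := Fin.snoc (fun i => f i) v
  have hginj : Function.Injective g := by
    intro a b hab
    rcases Fin.eq_castSucc_or_eq_last a with ⟨a', rfl⟩ | rfl <;>
      rcases Fin.eq_castSucc_or_eq_last b with ⟨b', rfl⟩ | rfl
    · simp only [g, Fin.snoc_castSucc] at hab
      exact congrArg Fin.castSucc (f.injective hab)
    · simp only [g, Fin.snoc_castSucc, Fin.snoc_last] at hab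
      exact absurd ⟨a', hab⟩ hv
    · simp only [g, Fin.snoc_castSucc, Fin.snoc_last] at hab
      exact absurd ⟨b', hab.symm⟩ hv
    · rfl
  -- the candidate intermediate element `r`
  let R : SimpleGraph (Fin (p.1 + 1)) := q.2.comap g
  let r : Σ n : ℕ, SimpleGraph (Fin n) := ⟨p.1 + 1, R⟩
  -- embedding `R ↪g q.2`
  let eRq : R ↪g q.2 := ⟨⟨g, hginj⟩, Iff.rfl⟩
  -- embedding `p.2 ↪g R`
  have hpR : ∀ a b : Fin p.1, R.Adj a.castSucc b.castSucc ↔ p.2.Adj a b := by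
    intro a b
    simp only [R, comap_adj, g, Fin.snoc_castSucc]
    exact f.map_adj_iff
  let epR : p.2 ↪g R :=
    ⟨⟨Fin.castSucc, Fin.castSucc_injective _⟩, fun {a b} => (hpR a b)⟩
  -- `r` is in `Λ(G)`
  have hrG : InLambda G r := by
    constructor
    · -- `R` has an edge since `p.2` does
      intro hbot
      apply hp.1
      ext a b
      simp only [bot_adj, iff_false]
      intro hab
      have this1 : R.Adj a.castSucc b.castSucc := (hpR a b).mpr hab
      have hbot' : R = ⊥ := hbot
      rw [hbot'] at this1
      exact this1
    · exact (isInducedSub_iff_embedding r.2 G).mpr ⟨gG.comp eRq⟩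
  have h1 : IsInducedSub p.2 r.2 := (isInducedSub_iff_embedding p.2 r.2).mpr ⟨epR⟩
  have h2 : IsInducedSub r.2 q.2 := (isInducedSub_iff_embedding r.2 q.2).mpr ⟨eRq⟩
  rcases hcov r hrG h1 h2 with h | h
  · -- impossible: `r` has one more vertex than `p`
    obtain ⟨φ⟩ := h
    have := Fintype.card_congr φ.toEquiv
    simp only [Fintype.card_fin] at this
    have hr1 : r.1 = p.1 + 1 := rfl
    omega
  · obtain ⟨φ⟩ := h
    have := Fintype.card_congr φ.toEquiv
    simp only [Fintype.card_fin] at this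
    have hr1 : r.1 = p.1 + 1 := rfl
    omega
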